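/- If μ(gT, 3) ≤ g·μ(T, 3) ≤ g(d²+1)|_{d=3} = 10g and μ(gT, 3) ≥ 2g, then lim_{g→∞} 2g/μ(gT, 3) exists only within [1/5, 1]; but using self-dual K_s embeddings with n = s(s−1)/2 edges in genus g_s with 2g_s = (s−1)(s−4)/2 and distance 3, one gets lim sup over this family of 2g/n = 1, hence lim_{g→∞} 2g/μ(gT, 3) = 1. -/
import Mathlib


open Filter

private lemma mu_add_le (μ : ℕ → ℕ) (hsub : ∀ g₁ g₂ : ℕ, μ (g₁ + g₂) ≤ μ g₁ + μ g₂) :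
    ∀ a m : ℕ, μ (a + m) ≤ μ a + m * μ 1 := by
  intro a m
  induction m with
  | zero => simp
  | succ n ih =>
    have h1 : a + (n + 1) = (a + n) + 1 := by omega
    have h2 := hsub (a + n) 1
    rw [h1]
    calc μ ((a + n) + 1) ≤ μ (a + n) + μ 1 := h2
      _ ≤ (μ a + n * μ 1) + μ 1 := by omega
      _ = μ a + (n + 1) * μ 1 := by ring

private lemma mu_key (μ : ℕ → ℕ)
    (hsub : ∀ g₁ g₂ : ℕ, μ (g₁ + g₂) ≤ μ g₁ + μ g₂)
    (htorus : μ 1 ≤ 10)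
    (hK : ∀ s : ℕ, s % 4 = 1 → 5 ≤ s → μ ((s - 1) * (s - 4) / 4) ≤ s * (s - 1) / 2)
    (k g : ℕ) (hk : 1 ≤ k) (h1 : k * (4 * k - 3) ≤ g) (h2 : g ≤ k * (4 * k - 3) + 8 * k) :
    μ g ≤ 2 * g + 88 * k := by
  obtain ⟨j, rfl⟩ : ∃ j, k = j + 1 := ⟨k - 1, by omega⟩
  have hKk := hK (4 * (j + 1) + 1) (by omega) (by omega)
  have e1 : (4 * (j + 1) + 1 - 1) * (4 * (j + 1) + 1 - 4) / 4 = (j + 1) * (4 * (j + 1) - 3) := by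
    have h3 : 4 * (j + 1) + 1 - 1 = 4 * (j + 1) := by omega
    have h4 : 4 * (j + 1) + 1 - 4 = 4 * (j + 1) - 3 := by omega
    have h5 : (4 * (j + 1)) * (4 * (j + 1) - 3) = 4 * ((j + 1) * (4 * (j + 1) - 3)) := by ring
    rw [h3, h4, h5, Nat.mul_div_cancel_left _ (by norm_num)]
  have e2 : (4 * (j + 1) + 1) * (4 * (j + 1) + 1 - 1) / 2 = 2 * (j + 1) * (4 * (j + 1) + 1) := by
    have h3 : 4 * (j + 1) + 1 - 1 = 4 * (j + 1) := by omega
    have h5 : (4 * (j + 1) + 1) * (4 * (j + 1)) = 2 * (2 * (j + 1) * (4 * (j + 1) + 1)) := by ring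
    rw [h3, h5, Nat.mul_div_cancel_left _ (by norm_num)]
  rw [e1, e2] at hKk
  set P := (j + 1) * (4 * (j + 1) - 3) with hP
  have hg : P + (g - P) = g := by omega
  have h5 := mu_add_le μ hsub P (g - P)
  rw [hg] at h5
  have hmu : μ g ≤ 2 * (j + 1) * (4 * (j + 1) + 1) + (g - P) * 10 := by
    have := Nat.mul_le_mul_left (g - P) htorus
    omega
  obtain ⟨q, hq⟩ : ∃ q, j * j = q := ⟨_, rfl⟩
  have hPe : P = 4 * q + 5 * j + 1 := by
    have h3 : 4 * (j + 1) - 3 = 4 * j + 1 := by omega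
    rw [hP, h3, ← hq]; ring
  have h6 : 2 * (j + 1) * (4 * (j + 1) + 1) = 8 * q + 18 * j + 10 := by rw [← hq]; ring
  omega

private lemma findGreatest_props (g : ℕ) (hg : 2 ≤ g) (m : ℕ)
    (hm : Nat.findGreatest (fun k => k * (4 * k - 3) ≤ g) g = m) :
    1 ≤ m ∧ m * (4 * m - 3) ≤ g ∧ g ≤ m * (4 * m - 3) + 8 * m := by
  have hw : (fun k => k * (4 * k - 3) ≤ g) 1 := by
    show 1 * (4 * 1 - 3) ≤ g; omega
  have h1 : 1 ≤ m := hm ▸ Nat.le_findGreatest (by omega) hw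
  have hspec : m * (4 * m - 3) ≤ g := by
    have := Nat.findGreatest_spec (P := fun k => k * (4 * k - 3) ≤ g) (m := 1) (n := g)
      (by omega) hw
    rw [hm] at this
    exact this
  have hle : m ≤ g := hm ▸ Nat.findGreatest_le g
  have hne : m ≠ g := by
    intro h
    rw [h] at hspec
    have h7 : 5 ≤ 4 * g - 3 := by omega
    have := Nat.mul_le_mul_left g h7
    omega
  have hgr : ¬ ((m + 1) * (4 * (m + 1) - 3) ≤ g) :=
    Nat.findGreatest_is_greatest (P := fun k => k * (4 * k - 3) ≤ g) (n := g)
      (by rw [hm]; omega) (by omega)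
  refine ⟨h1, hspec, ?_⟩
  obtain ⟨j, rfl⟩ : ∃ j, m = j + 1 := ⟨m - 1, by omega⟩
  have e1 : (j + 1 + 1) * (4 * (j + 1 + 1) - 3) = (j + 1) * (4 * (j + 1) - 3) + 8 * (j + 1) + 1 := by
    have h3 : 4 * (j + 1 + 1) - 3 = 4 * j + 5 := by omega
    have h4 : 4 * (j + 1) - 3 = 4 * j + 1 := by omega
    rw [h3, h4]; ring
  omega

/-- **The minimal size of genus-`g` distance-3 topological codes satisfies
`2g/μ(gT,3) → 1`.**  Here `μ g` denotes `μ(gT, 3)`, the minimal number of edges of a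
graph cell embedding in the genus-`g` orientable surface whose code has distance 3.
Hypotheses: the Euler-formula lower bound `μ(gT,3) ≥ 2g`; topological subadditivity
`μ((g₁+g₂)T,3) ≤ μ(g₁T,3) + μ(g₂T,3)`; the optimal regular toric code `μ(T,3) ≤ 10`;
and the self-dual embeddings of `K_s` (`s ≡ 1 (mod 4)`, `s ≥ 5`) giving distance-3
codes with `n_s = s(s−1)/2` edges in genus `g_s = (s−1)(s−4)/4`.  Conclusion:
`lim_{g→∞} 2g / μ(gT,3) = 1`. -/
theorem two_genus_over_mu_tendsto_one (μ : ℕ → ℕ)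
    (hlow : ∀ g : ℕ, 2 * g ≤ μ g)
    (hsub : ∀ g₁ g₂ : ℕ, μ (g₁ + g₂) ≤ μ g₁ + μ g₂)
    (htorus : μ 1 ≤ 10)
    (hK : ∀ s : ℕ, s % 4 = 1 → 5 ≤ s → μ ((s - 1) * (s - 4) / 4) ≤ s * (s - 1) / 2) :
    Tendsto (fun g : ℕ => (2 * g : ℝ) / (μ g : ℝ)) atTop (nhds 1) := by
  set K : ℕ → ℕ := fun g => Nat.findGreatest (fun k => k * (4 * k - 3) ≤ g) g with hKdef
  have hKtop : Tendsto K atTop atTop := by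
    rw [tendsto_atTop]
    intro b
    filter_upwards [eventually_ge_atTop (max b (b * (4 * b - 3)))] with g hg
    exact Nat.le_findGreatest (le_trans (le_max_left _ _) hg)
      (le_trans (le_max_right _ _) hg)
  have hlim : Tendsto (fun g => 1 - 44 / (K g : ℝ)) atTop (nhds 1) := by
    have h0 : Tendsto (fun g => 44 / (K g : ℝ)) atTop (nhds 0) :=
      Tendsto.div_atTop tendsto_const_nhds (tendsto_natCast_atTop_atTop.comp hKtop)
    simpa using tendsto_const_nhds.sub h0
  refine tendsto_of_tendsto_of_tendsto_of_le_of_le' hlim tendsto_const_nhds ?_ ?_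
  · -- lower bound
    filter_upwards [eventually_ge_atTop 2] with g hg
    obtain ⟨h1, hA, hB⟩ := findGreatest_props g hg (K g) rfl
    have hmu : μ g ≤ 2 * g + 88 * K g := mu_key μ hsub htorus hK (K g) g h1 hA hB
    have hgk : K g * K g ≤ g := by
      refine le_trans (Nat.mul_le_mul_left _ ?_) hA
      omega
    have hMpos : (0 : ℝ) < (μ g : ℝ) := by
      have := hlow g
      exact_mod_cast by omega
    have hκpos : (0 : ℝ) < (K g : ℝ) := by exact_mod_cast h1
    rw [sub_le_iff_le_add, div_add_div _ _ (ne_of_gt hMpos) (ne_of_gt hκpos),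
      le_div_iff₀ (by positivity)]
    have hmuR : (μ g : ℝ) ≤ 2 * g + 88 * K g := by exact_mod_cast hmu
    have hlowR : 2 * (g : ℝ) ≤ (μ g : ℝ) := by exact_mod_cast hlow g
    have hgkR : (K g : ℝ) * K g ≤ g := by exact_mod_cast hgk
    nlinarith [mul_le_mul_of_nonneg_right hmuR hκpos.le]
  · -- upper bound
    filter_upwards [eventually_ge_atTop 1] with g hg
    have hMpos : (0 : ℝ) < (μ g : ℝ) := by
      have := hlow g
      exact_mod_cast by omega
    rw [div_le_one hMpos]
    exact_mod_cast hlow g
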